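/- Let Q be a partially ordered set on n points whose height is at most k, i.e. every chain of Q has at most k elements, where k ≥ 1. Then e(Q) ≥ n! / k^n. -/

import Mathlib

/-- The number of linear extensions of a partial order `P` on `n` points:
bijections to `{1, ..., n}` (modeled as `Fin n` with its usual order) that
are strictly monotone with respect to `P`. -/
noncomputable def linExtCount (n : ℕ) (P : PartialOrder (Fin n)) : ℕ :=
  Nat.card {f : Fin n ≃ Fin n // ∀ x y : Fin n, P.lt x y → f x < f y}

/-- The number of comparable pairs of `P`: each unordered comparable pair
`{x, y}` corresponds to exactly one ordered pair `(x, y)` with `x ≺ y`. -/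
noncomputable def compCount (n : ℕ) (P : PartialOrder (Fin n)) : ℕ :=
  Nat.card {p : Fin n × Fin n // P.lt p.1 p.2}

open Finset

open scoped Classical in
/-- Level (height) of a point: max cardinality of a chain ending at `x`. -/
noncomputable def lvl {n : ℕ} (P : PartialOrder (Fin n)) (x : Fin n) : ℕ :=
  (Finset.univ.filter (fun C : Finset (Fin n) =>
    (∀ a ∈ C, ∀ b ∈ C, a ≠ b → P.lt a b ∨ P.lt b a) ∧ x ∈ C ∧
      ∀ a ∈ C, a = x ∨ P.lt a x)).sup Finset.card

open scoped Classical in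
lemma singleton_mem_lvlFilter {n : ℕ} (P : PartialOrder (Fin n)) (x : Fin n) :
    ({x} : Finset (Fin n)) ∈ (Finset.univ.filter (fun C : Finset (Fin n) =>
    (∀ a ∈ C, ∀ b ∈ C, a ≠ b → P.lt a b ∨ P.lt b a) ∧ x ∈ C ∧
      ∀ a ∈ C, a = x ∨ P.lt a x)) := by
  refine Finset.mem_filter.2 ⟨Finset.mem_univ _, ?_, Finset.mem_singleton_self x, ?_⟩
  · intro a ha b hb hab
    rw [Finset.mem_singleton] at ha hb
    exact absurd (ha.trans hb.symm) hab
  · intro a ha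
    rw [Finset.mem_singleton] at ha
    exact Or.inl ha

lemma one_le_lvl {n : ℕ} (P : PartialOrder (Fin n)) (x : Fin n) : 1 ≤ lvl P x := by
  classical
  have h := Finset.le_sup (f := Finset.card) (singleton_mem_lvlFilter P x)
  simpa [lvl] using h

lemma lvl_le {n k : ℕ} (P : PartialOrder (Fin n))
    (hheight : ∀ C : Finset (Fin n),
      (∀ x ∈ C, ∀ y ∈ C, x ≠ y → P.lt x y ∨ P.lt y x) → C.card ≤ k) (x : Fin n) :
    lvl P x ≤ k := by
  classical
  refine Finset.sup_le fun C hC => ?_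
  simp only [Finset.mem_filter] at hC
  exact hheight C hC.2.1

lemma lvl_lt {n : ℕ} (P : PartialOrder (Fin n)) {x y : Fin n} (h : P.lt x y) :
    lvl P x < lvl P y := by
  classical
  obtain ⟨C, hC, hsup⟩ := Finset.exists_mem_eq_sup _ ⟨_, singleton_mem_lvlFilter P x⟩
    Finset.card
  simp only [Finset.mem_filter, Finset.mem_univ, true_and] at hC
  obtain ⟨hchain, hxC, hend⟩ := hC
  have hyC : y ∉ C := by
    intro hy
    rcases hend y hy with heq | hlt
    · exact @lt_irrefl _ P.toPreorder x (heq ▸ h)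
    · exact @lt_asymm _ P.toPreorder _ _ h hlt
  have hlty : ∀ a ∈ C, P.lt a y := by
    intro a ha
    rcases hend a ha with rfl | hlt
    · exact h
    · exact @lt_trans _ P.toPreorder _ _ _ hlt h
  have hmem : (insert y C) ∈ (Finset.univ.filter (fun C : Finset (Fin n) =>
      (∀ a ∈ C, ∀ b ∈ C, a ≠ b → P.lt a b ∨ P.lt b a) ∧ y ∈ C ∧
        ∀ a ∈ C, a = y ∨ P.lt a y)) := by
    refine Finset.mem_filter.2 ⟨Finset.mem_univ _, ?_, Finset.mem_insert_self y C, ?_⟩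
    · intro a ha b hb hab
      rw [Finset.mem_insert] at ha hb
      rcases ha with rfl | ha
      · rcases hb with rfl | hb
        · exact absurd rfl hab
        · exact Or.inr (hlty b hb)
      · rcases hb with rfl | hb
        · exact Or.inl (hlty a ha)
        · exact hchain a ha b hb hab
    · intro a ha
      rw [Finset.mem_insert] at ha
      rcases ha with rfl | ha
      · exact Or.inl rfl
      · exact Or.inr (hlty a ha)
  have h1 := Finset.le_sup (f := Finset.card) hmem
  have h2 : (insert y C).card = C.card + 1 := Finset.card_insert_of_notMem hyC
  have h3 : lvl P x = C.card := hsup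
  have h4 : (insert y C).card ≤ lvl P y := h1
  omega

lemma key_aux {l1 l2 a b m : ℕ} (ha : a < m) (hb : b < m)
    (h : l1 * m + a = l2 * m + b) : l1 = l2 ∧ a = b := by
  have h1 : l1 = l2 := by
    rcases lt_trichotomy l1 l2 with h' | h' | h'
    · exfalso
      have hcal : l1 * m + a < l2 * m + b := by
        calc l1 * m + a < l1 * m + m := by omega
        _ = (l1 + 1) * m := by ring
        _ ≤ l2 * m := Nat.mul_le_mul_right _ h'
        _ ≤ l2 * m + b := Nat.le_add_right _ _
      exact absurd h (Nat.ne_of_lt hcal)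
    · exact h'
    · exfalso
      have hcal : l2 * m + b < l1 * m + a := by
        calc l2 * m + b < l2 * m + m := by omega
        _ = (l2 + 1) * m := by ring
        _ ≤ l1 * m := Nat.mul_le_mul_right _ h'
        _ ≤ l1 * m + a := Nat.le_add_right _ _
      exact absurd h (Nat.ne_of_gt hcal)
  subst h1
  exact ⟨rfl, by omega⟩

lemma image_card {n : ℕ} (w : Fin n → ℕ) (hw : Function.Injective w) :
    (Finset.univ.image w).card = n := by
  classical
  rw [Finset.card_image_of_injective _ hw, Finset.card_univ, Fintype.card_fin]

open scoped Classical in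
/-- The rank equivalence induced by an injective weight function. -/
noncomputable def rankEquiv {n : ℕ} (w : Fin n → ℕ) (hw : Function.Injective w) :
    Fin n ≃ Fin n :=
  (Equiv.ofBijective
      (fun x => (⟨w x, Finset.mem_image_of_mem w (Finset.mem_univ x)⟩ :
        {a // a ∈ Finset.univ.image w}))
      ((Fintype.bijective_iff_injective_and_card _).2
        ⟨fun a b hab => hw (congrArg Subtype.val hab),
         by simp [Fintype.card_coe, image_card w hw]⟩)).trans
    ((Finset.univ.image w).orderIsoOfFin (image_card w hw)).toEquiv.symm

open scoped Classical in
lemma rankEquiv_lt_iff {n : ℕ} (w : Fin n → ℕ) (hw : Function.Injective w) (x y : Fin n) :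
    rankEquiv w hw x < rankEquiv w hw y ↔ w x < w y := by
  simp only [rankEquiv, Equiv.trans_apply, Equiv.ofBijective_apply]
  exact Iff.trans
    (((Finset.univ.image w).orderIsoOfFin (image_card w hw)).symm.lt_iff_lt)
    Subtype.mk_lt_mk

/-- The key weight function of a permutation: lexicographic in (level, σ-value). -/
noncomputable def keyf {n : ℕ} (P : PartialOrder (Fin n)) (σ : Equiv.Perm (Fin n))
    (x : Fin n) : ℕ :=
  lvl P x * n + (σ x : ℕ)

lemma keyf_inj {n : ℕ} (P : PartialOrder (Fin n)) (σ : Equiv.Perm (Fin n)) :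
    Function.Injective (keyf P σ) := by
  intro a b hab
  obtain ⟨-, h2⟩ := key_aux (σ a).isLt (σ b).isLt hab
  exact σ.injective (Fin.ext h2)

lemma keyf_mono {n : ℕ} (P : PartialOrder (Fin n)) (σ : Equiv.Perm (Fin n))
    {x y : Fin n} (hxy : P.lt x y) : keyf P σ x < keyf P σ y := by
  have h1 : lvl P x < lvl P y := lvl_lt P hxy
  calc lvl P x * n + (σ x : ℕ) < lvl P x * n + n := by have := (σ x).isLt; omega
    _ = (lvl P x + 1) * n := by ring
    _ ≤ lvl P y * n := Nat.mul_le_mul_right _ h1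
    _ ≤ lvl P y * n + (σ y : ℕ) := Nat.le_add_right _ _

/-- The linear extension associated to a permutation. -/
noncomputable def Fperm {n : ℕ} (P : PartialOrder (Fin n)) (σ : Equiv.Perm (Fin n)) :
    Fin n ≃ Fin n :=
  rankEquiv (keyf P σ) (keyf_inj P σ)

lemma Fperm_lt_iff {n : ℕ} (P : PartialOrder (Fin n)) (σ : Equiv.Perm (Fin n))
    (x y : Fin n) : Fperm P σ x < Fperm P σ y ↔ keyf P σ x < keyf P σ y :=
  rankEquiv_lt_iff _ _ x y

lemma Fperm_mono {n : ℕ} (P : PartialOrder (Fin n)) (σ : Equiv.Perm (Fin n))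
    (x y : Fin n) (h : P.lt x y) : Fperm P σ x < Fperm P σ y :=
  (Fperm_lt_iff P σ x y).2 (keyf_mono P σ h)

lemma eq_of_filter_lt_card {α : Type*} [LinearOrder α] [DecidableEq α] {S : Finset α}
    {a b : α} (ha : a ∈ S) (hb : b ∈ S)
    (h : (S.filter (fun i => i < a)).card = (S.filter (fun i => i < b)).card) : a = b := by
  rcases lt_trichotomy a b with hab | hab | hab
  · exfalso
    have hsub : S.filter (fun i => i < a) ⊂ S.filter (fun i => i < b) := by
      refine (Finset.ssubset_iff_of_subset
        (Finset.monotone_filter_right _ (fun i _ hi => hi.trans hab))).2 ⟨a, ?_, ?_⟩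
      · exact Finset.mem_filter.2 ⟨ha, hab⟩
      · simp [Finset.mem_filter]
    exact absurd h (Nat.ne_of_lt (Finset.card_lt_card hsub))
  · exact hab
  · exfalso
    have hsub : S.filter (fun i => i < b) ⊂ S.filter (fun i => i < a) := by
      refine (Finset.ssubset_iff_of_subset
        (Finset.monotone_filter_right _ (fun i _ hi => hi.trans hab))).2 ⟨b, ?_, ?_⟩
      · exact Finset.mem_filter.2 ⟨hb, hab⟩
      · simp [Finset.mem_filter]
    exact absurd h (Nat.ne_of_gt (Finset.card_lt_card hsub))

theorem linExtCount_ge_of_height_le (n k : ℕ) (hk : 1 ≤ k) (P : PartialOrder (Fin n))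
    (hheight : ∀ C : Finset (Fin n),
      (∀ x ∈ C, ∀ y ∈ C, x ≠ y → P.lt x y ∨ P.lt y x) → C.card ≤ k) :
    (Nat.factorial n : ℝ) / (k : ℝ) ^ n ≤ (linExtCount n P : ℝ) := by
  classical
  have hGlt : ∀ (σ : Equiv.Perm (Fin n)) (i : Fin n), lvl P (σ.symm i) - 1 < k := by
    intro σ i
    have h1 := one_le_lvl P (σ.symm i)
    have h2 := lvl_le P hheight (σ.symm i)
    omega
  set Φ : Equiv.Perm (Fin n) →
      {f : Fin n ≃ Fin n // ∀ x y : Fin n, P.lt x y → f x < f y} × (Fin n → Fin k) :=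
    fun σ => (⟨Fperm P σ, Fperm_mono P σ⟩, fun i => ⟨lvl P (σ.symm i) - 1, hGlt σ i⟩)
    with hΦdef
  have hΦinj : Function.Injective Φ := by
    intro σ τ hστ
    have hF : Fperm P σ = Fperm P τ := by
      have := congrArg (fun p => (p.1 : Fin n ≃ Fin n)) hστ
      simpa [hΦdef] using this
    have hG := congrArg Prod.snd hστ
    simp only [hΦdef] at hG
    have hlvl : ∀ i : Fin n, lvl P (σ.symm i) = lvl P (τ.symm i) := by
      intro i
      have h0 := congrFun hG i
      have h3 : lvl P (σ.symm i) - 1 = lvl P (τ.symm i) - 1 := congrArg Fin.val h0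
      have h1 := one_le_lvl P (σ.symm i)
      have h2 := one_le_lvl P (τ.symm i)
      omega
    ext x
    show (σ x : ℕ) = (τ x : ℕ)
    suffices h : σ x = τ x by rw [h]
    set S : Finset (Fin n) := Finset.univ.filter (fun i => lvl P (σ.symm i) = lvl P x)
      with hS
    have hσxS : σ x ∈ S := by
      refine Finset.mem_filter.2 ⟨Finset.mem_univ _, ?_⟩
      rw [Equiv.symm_apply_apply]
    have hτxS : τ x ∈ S := by
      refine Finset.mem_filter.2 ⟨Finset.mem_univ _, ?_⟩
      rw [hlvl, Equiv.symm_apply_apply]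
    have hcount : ∀ (ρ : Equiv.Perm (Fin n)),
        (∀ i, lvl P (ρ.symm i) = lvl P (σ.symm i)) →
        (S.filter (fun i => i < ρ x)).card =
          (Finset.univ.filter (fun y => lvl P y = lvl P x ∧ Fperm P ρ y < Fperm P ρ x)).card := by
      intro ρ hρ
      refine Finset.card_nbij' (fun i => ρ.symm i) (fun y => ρ y) ?_ ?_ ?_ ?_
      · intro i hi
        rw [Finset.mem_coe, Finset.mem_filter, hS, Finset.mem_filter] at hi
        obtain ⟨⟨-, h1⟩, h2⟩ := hi
        have hlv : lvl P (ρ.symm i) = lvl P x := (hρ i).trans h1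
        refine Finset.mem_filter.2 ⟨Finset.mem_univ _, hlv, ?_⟩
        rw [Fperm_lt_iff]
        show lvl P (ρ.symm i) * n + (ρ (ρ.symm i) : ℕ) < lvl P x * n + (ρ x : ℕ)
        rw [Equiv.apply_symm_apply, hlv]
        have h2' : (i : ℕ) < (ρ x : ℕ) := h2
        omega
      · intro y hy
        rw [Finset.mem_coe, Finset.mem_filter] at hy
        obtain ⟨-, h1, h2⟩ := hy
        rw [Fperm_lt_iff] at h2
        have h2' : lvl P y * n + (ρ y : ℕ) < lvl P x * n + (ρ x : ℕ) := h2
        rw [h1] at h2'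
        have hyx : (ρ y : ℕ) < (ρ x : ℕ) := by omega
        refine Finset.mem_filter.2 ⟨?_, hyx⟩
        rw [hS]
        refine Finset.mem_filter.2 ⟨Finset.mem_univ _, ?_⟩
        rw [← hρ, Equiv.symm_apply_apply]
        exact h1
      · intro i _; exact Equiv.apply_symm_apply ρ i
      · intro y _; exact Equiv.symm_apply_apply ρ y
    have hc1 := hcount σ (fun i => rfl)
    have hc2 := hcount τ (fun i => (hlvl i).symm)
    rw [hF] at hc1
    exact eq_of_filter_lt_card hσxS hτxS (hc1.trans hc2.symm)
  have hmain : Nat.factorial n ≤ linExtCount n P * k ^ n := by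
    have h1 := Nat.card_le_card_of_injective Φ hΦinj
    rw [Nat.card_prod] at h1
    have h2 : Nat.card (Equiv.Perm (Fin n)) = Nat.factorial n := by
      rw [Nat.card_eq_fintype_card, Fintype.card_perm, Fintype.card_fin]
    have h3 : Nat.card (Fin n → Fin k) = k ^ n := by
      rw [Nat.card_eq_fintype_card]
      simp
    rw [h2, h3] at h1
    exact h1
  have hkpos : (0 : ℝ) < (k : ℝ) ^ n := by positivity
  rw [div_le_iff₀ hkpos]
  exact_mod_cast hmain
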